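/- arXiv:2311.05208 — 2 statements merged into one kernel-verified Lean document; each statement's English description precedes it below -/
import Mathlib

section
/- If a finite positive Borel measure μ on the unit sphere S_{N-1} linearly majorizes a finite positive Borel measure ν on S_{N-1}, then for any finitely many linear functionals ℓ_1,…,ℓ_m on ℝ^N one has ∫_{S_{N-1}} max(ℓ_1,…,ℓ_m) dμ ≥ ∫_{S_{N-1}} max(ℓ_1,…,ℓ_m) dν, where max(ℓ_1,…,ℓ_m)(x) = max_k ℓ_k(x). -/
open MeasureTheory

/-- A finite positive Borel measure `μ` on the unit sphere `S_{N-1}` linearly majorizes `ν`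
if for every decomposition of the sphere into finitely many pairwise disjoint Borel sets
`U 1, …, U m` there are finite positive measures `μs 1, …, μs m` summing to `μ` such that
for each `k` and every linear functional `ℓ` on `ℝ^N`,
`∫ ℓ dμs k = ∫_{U k} ℓ dν`. -/
def LinearlyMajorizes (N : ℕ)
    (μ ν : Measure (Metric.sphere (0 : EuclideanSpace ℝ (Fin N)) 1)) : Prop :=
  ∀ (m : ℕ) (U : Fin m → Set (Metric.sphere (0 : EuclideanSpace ℝ (Fin N)) 1)),
    (∀ k, MeasurableSet (U k)) →
    (Pairwise fun i j => Disjoint (U i) (U j)) →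
    (⋃ k, U k) = Set.univ →
    ∃ μs : Fin m → Measure (Metric.sphere (0 : EuclideanSpace ℝ (Fin N)) 1),
      (∀ k, IsFiniteMeasure (μs k)) ∧ μ = ∑ k, μs k ∧
      ∀ (k : Fin m) (ℓ : EuclideanSpace ℝ (Fin N) →ₗ[ℝ] ℝ),
        ∫ x, ℓ (x : EuclideanSpace ℝ (Fin N)) ∂(μs k)
          = ∫ x in U k, ℓ (x : EuclideanSpace ℝ (Fin N)) ∂ν

lemma aux_integrable {X : Type*} [TopologicalSpace X] [CompactSpace X] [MeasurableSpace X]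
    [OpensMeasurableSpace X] (g : X → ℝ) (hg : Continuous g)
    (ρ : Measure X) [IsFiniteMeasure ρ] : Integrable g ρ :=
  hg.integrable_of_hasCompactSupport
    (IsCompact.of_isClosed_subset isCompact_univ (isClosed_tsupport g) (Set.subset_univ _))

/-- If `μ` linearly majorizes `ν` on the unit sphere, then for any finitely many (at least
one) linear functionals `ℓ 0, …, ℓ m` on `ℝ^N`,
`∫ max (ℓ 0, …, ℓ m) dμ ≥ ∫ max (ℓ 0, …, ℓ m) dν`. -/
theorem linearlyMajorizes_integral_max_le {N : ℕ}
    (μ ν : Measure (Metric.sphere (0 : EuclideanSpace ℝ (Fin N)) 1))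
    [IsFiniteMeasure μ] [IsFiniteMeasure ν]
    (h : LinearlyMajorizes N μ ν)
    (m : ℕ) (ℓ : Fin (m + 1) → (EuclideanSpace ℝ (Fin N) →ₗ[ℝ] ℝ)) :
    ∫ x, (⨆ k, ℓ k (x : EuclideanSpace ℝ (Fin N))) ∂ν
      ≤ ∫ x, (⨆ k, ℓ k (x : EuclideanSpace ℝ (Fin N))) ∂μ := by
  classical
  set f : Metric.sphere (0 : EuclideanSpace ℝ (Fin N)) 1 → ℝ :=
    fun x => ⨆ k, ℓ k (x : EuclideanSpace ℝ (Fin N)) with hf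
  have hℓc : ∀ k : Fin (m + 1),
      Continuous (fun x : Metric.sphere (0 : EuclideanSpace ℝ (Fin N)) 1 =>
        ℓ k (x : EuclideanSpace ℝ (Fin N))) := fun k =>
    (ℓ k).continuous_of_finiteDimensional.comp continuous_subtype_val
  have hfc : Continuous f := by
    have : f = fun x : Metric.sphere (0 : EuclideanSpace ℝ (Fin N)) 1 =>
        Finset.univ.sup' Finset.univ_nonempty
          (fun k => ℓ k (x : EuclideanSpace ℝ (Fin N))) := by
      funext x; rw [Finset.sup'_univ_eq_ciSup]
    rw [this]
    exact continuous_iff_continuousAt.2 fun x =>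
      ContinuousAt.finset_sup'_apply _ fun i _ => (hℓc i).continuousAt
  have hle : ∀ (x : Metric.sphere (0 : EuclideanSpace ℝ (Fin N)) 1) (k : Fin (m + 1)),
      ℓ k (x : EuclideanSpace ℝ (Fin N)) ≤ f x := fun x k =>
    le_ciSup (f := fun k => ℓ k (x : EuclideanSpace ℝ (Fin N)))
      (Set.Finite.bddAbove (Set.finite_range _)) k
  have hach : ∀ x : Metric.sphere (0 : EuclideanSpace ℝ (Fin N)) 1,
      ∃ k, f x ≤ ℓ k (x : EuclideanSpace ℝ (Fin N)) := by
    intro x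
    obtain ⟨k, hk⟩ := Finite.exists_max fun k => ℓ k (x : EuclideanSpace ℝ (Fin N))
    exact ⟨k, ciSup_le hk⟩
  set A : Fin (m + 1) → Set (Metric.sphere (0 : EuclideanSpace ℝ (Fin N)) 1) :=
    fun k => {x | f x ≤ ℓ k (x : EuclideanSpace ℝ (Fin N))} with hA
  have hAmeas : ∀ k, MeasurableSet (A k) := fun k =>
    measurableSet_le hfc.measurable (hℓc k).measurable
  set U : Fin (m + 1) → Set (Metric.sphere (0 : EuclideanSpace ℝ (Fin N)) 1) :=
    fun k => A k \ ⋃ j, ⋃ (_ : j < k), A j with hU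
  have hUmeas : ∀ k, MeasurableSet (U k) := fun k =>
    (hAmeas k).diff (MeasurableSet.iUnion fun j => MeasurableSet.iUnion fun _ => hAmeas j)
  have hdisj : Pairwise fun i j => Disjoint (U i) (U j) := by
    intro i j hij
    rcases hij.lt_or_gt with hlt | hlt
    · exact Set.disjoint_left.2 fun x hxi hxj =>
        hxj.2 (Set.mem_iUnion.2 ⟨i, Set.mem_iUnion.2 ⟨hlt, hxi.1⟩⟩)
    · exact Set.disjoint_right.2 fun x hxj hxi =>
        hxi.2 (Set.mem_iUnion.2 ⟨j, Set.mem_iUnion.2 ⟨hlt, hxj.1⟩⟩)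
  have hcover : (⋃ k, U k) = Set.univ := by
    ext x
    simp only [Set.mem_univ, iff_true, Set.mem_iUnion]
    have hne : (Finset.univ.filter fun k => x ∈ A k).Nonempty := by
      obtain ⟨k, hk⟩ := hach x
      exact ⟨k, Finset.mem_filter.2 ⟨Finset.mem_univ _, hk⟩⟩
    refine ⟨(Finset.univ.filter fun k => x ∈ A k).min' hne, ?_, ?_⟩
    · exact (Finset.mem_filter.1 (Finset.min'_mem _ hne)).2
    · intro hx
      rw [Set.mem_iUnion] at hx
      obtain ⟨j, hj⟩ := hx
      rw [Set.mem_iUnion] at hj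
      obtain ⟨hjlt, hjA⟩ := hj
      exact absurd (Finset.min'_le _ j (Finset.mem_filter.2 ⟨Finset.mem_univ _, hjA⟩))
        (not_le.2 hjlt)
  obtain ⟨μs, hfin, hsum, hint⟩ := h (m + 1) U hUmeas hdisj hcover
  have hfν : Integrable f ν := aux_integrable f hfc ν
  have hfμs : ∀ k, Integrable f (μs k) := fun k => by
    have := hfin k; exact aux_integrable f hfc (μs k)
  have hℓμs : ∀ k, Integrable
      (fun x : Metric.sphere (0 : EuclideanSpace ℝ (Fin N)) 1 =>
        ℓ k (x : EuclideanSpace ℝ (Fin N))) (μs k) := fun k => by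
    have := hfin k; exact aux_integrable _ (hℓc k) (μs k)
  calc ∫ x, f x ∂ν = ∫ x in Set.univ, f x ∂ν := setIntegral_univ.symm
    _ = ∫ x in ⋃ k, U k, f x ∂ν := by rw [hcover]
    _ = ∑ k, ∫ x in U k, f x ∂ν :=
        integral_iUnion_fintype hUmeas hdisj fun k => hfν.integrableOn
    _ = ∑ k, ∫ x in U k, ℓ k (x : EuclideanSpace ℝ (Fin N)) ∂ν := by
        refine Finset.sum_congr rfl fun k _ => setIntegral_congr_fun (hUmeas k) fun x hx => ?_
        exact le_antisymm hx.1 (hle x k)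
    _ = ∑ k, ∫ x, ℓ k (x : EuclideanSpace ℝ (Fin N)) ∂(μs k) := by
        exact Finset.sum_congr rfl fun k _ => (hint k (ℓ k)).symm
    _ ≤ ∑ k, ∫ x, f x ∂(μs k) :=
        Finset.sum_le_sum fun k _ => integral_mono (hℓμs k) (hfμs k) fun x => hle x k
    _ = ∫ x, f x ∂μ := by
        rw [hsum]; exact (integral_finset_sum_measure fun k _ => hfμs k).symm
end

section
/- Every sublinear function p : ℝ^N → ℝ is a uniform limit on the unit sphere of pointwise maxima of finite families of linear functionals: for every ε > 0 there exist finitely many linear functionals ℓ_1,…,ℓ_m on ℝ^N such that |p(x) − max_k ℓ_k(x)| ≤ ε for all x in the unit sphere S_{N-1}. -/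
/-- `p : ℝ^N → ℝ` is sublinear: positively homogeneous and subadditive. -/
def Sublinear (N : ℕ) (p : EuclideanSpace ℝ (Fin N) → ℝ) : Prop :=
  (∀ t : ℝ, 0 ≤ t → ∀ x, p (t • x) = t * p x) ∧
  (∀ x y, p (x + y) ≤ p x + p y)

section Aux

variable {N : ℕ} {p : EuclideanSpace ℝ (Fin N) → ℝ}

lemma sublinear_zero (hp : Sublinear N p) : p 0 = 0 := by
  have := hp.1 0 le_rfl 0
  simpa using this

lemma sublinear_continuous (hp : Sublinear N p) : Continuous p := by
  have hconv : ConvexOn ℝ (Set.univ : Set (EuclideanSpace ℝ (Fin N))) p := by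
    refine ⟨convex_univ, fun x _ y _ a b ha hb hab => ?_⟩
    calc p (a • x + b • y) ≤ p (a • x) + p (b • y) := hp.2 _ _
      _ = a * p x + b * p y := by rw [hp.1 a ha, hp.1 b hb]
      _ = a • p x + b • p y := rfl
  have := hconv.continuousOn isOpen_univ
  exact continuousOn_univ.1 this

/-- Hahn–Banach: a supporting linear functional at `x₀ ≠ 0`. -/
lemma sublinear_support (hp : Sublinear N p) (x₀ : EuclideanSpace ℝ (Fin N)) (hx₀ : x₀ ≠ 0) :
    ∃ g : EuclideanSpace ℝ (Fin N) →ₗ[ℝ] ℝ, g x₀ = p x₀ ∧ ∀ x, g x ≤ p x := by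
  set f := LinearPMap.mkSpanSingleton (K := ℝ) (L := ℝ) (σ := RingHom.id ℝ) x₀ (p x₀) hx₀ with hf
  have hdom : ∀ z : f.domain, f z ≤ p z := by
    rintro ⟨z, hz⟩
    have hz' : z ∈ Submodule.span ℝ {x₀} := hz
    obtain ⟨c, rfl⟩ := Submodule.mem_span_singleton.1 hz'
    have happ : f ⟨c • x₀, hz⟩ = c • p x₀ := LinearPMap.mkSpanSingleton'_apply _ _ _ c _
    rw [happ]
    rcases le_or_gt 0 c with hc | hc
    · rw [hp.1 c hc]; rfl
    · have h1 : p 0 ≤ p (c • x₀) + p ((-c) • x₀) := by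
        have := hp.2 (c • x₀) ((-c) • x₀)
        simpa using this
      rw [sublinear_zero hp, hp.1 (-c) (by linarith)] at h1
      simp only [smul_eq_mul]
      nlinarith
  obtain ⟨g, hg1, hg2⟩ := exists_extension_of_le_sublinear f p
    (fun c hc x => hp.1 c hc.le x) hp.2 hdom
  refine ⟨g, ?_, hg2⟩
  have := hg1 ⟨x₀, Submodule.mem_span_singleton_self x₀⟩
  rw [this, LinearPMap.mkSpanSingleton_apply]

end Aux

/-- Every sublinear `p : ℝ^N → ℝ` is a uniform limit on the unit sphere of pointwise
maxima of finite (nonempty) families of linear functionals: for every `ε > 0` there are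
finitely many linear functionals `ℓ 0, …, ℓ m` with
`|p x - max (ℓ 0 x, …, ℓ m x)| ≤ ε` for all `x` in the unit sphere. -/
theorem sublinear_uniform_limit_of_max_linear {N : ℕ}
    (p : EuclideanSpace ℝ (Fin N) → ℝ) (hp : Sublinear N p)
    (ε : ℝ) (hε : 0 < ε) :
    ∃ (m : ℕ) (ℓ : Fin (m + 1) → (EuclideanSpace ℝ (Fin N) →ₗ[ℝ] ℝ)),
      ∀ x ∈ Metric.sphere (0 : EuclideanSpace ℝ (Fin N)) 1,
        |p x - ⨆ k, ℓ k x| ≤ ε := by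
  let E := EuclideanSpace ℝ (Fin N)
  by_cases hsph : (Metric.sphere (0 : E) 1).Nonempty
  swap
  · exact ⟨0, fun _ => 0, fun x hx => absurd ⟨x, hx⟩ hsph⟩
  -- choose supporting functionals
  have hne : ∀ x₀ : Metric.sphere (0 : E) 1, (x₀ : E) ≠ 0 := by
    intro x₀ h
    have hx₀ : ‖(x₀ : E)‖ = 1 := by
      have := x₀.2
      simpa [Metric.mem_sphere, dist_zero_right] using this
    rw [h] at hx₀
    simpa using hx₀
  choose L hL1 hL2 using fun x₀ : Metric.sphere (0 : E) 1 =>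
    sublinear_support hp x₀ (hne x₀)
  -- open cover
  set U : Metric.sphere (0 : E) 1 → Set E := fun x₀ => {y | p y - L x₀ y < ε} with hU
  have hUopen : ∀ x₀, IsOpen (U x₀) := fun x₀ => by
    have : Continuous fun y => p y - L x₀ y :=
      (sublinear_continuous hp).sub (L x₀).continuous_of_finiteDimensional
    exact isOpen_lt this continuous_const
  have hcover : Metric.sphere (0 : E) 1 ⊆ ⋃ x₀, U x₀ := by
    intro x hx
    refine Set.mem_iUnion.2 ⟨⟨x, hx⟩, ?_⟩
    simp only [hU, Set.mem_setOf_eq, hL1 ⟨x, hx⟩]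
    simpa using hε
  obtain ⟨t, ht⟩ := (isCompact_sphere (0 : E) 1).elim_finite_subcover U hUopen hcover
  have htne : t.Nonempty := by
    obtain ⟨x, hx⟩ := hsph
    obtain ⟨i, hi, _⟩ := Set.mem_iUnion₂.1 (ht hx)
    exact ⟨i, hi⟩
  have hcard : t.card = (t.card - 1) + 1 := (Nat.succ_pred_eq_of_pos (Finset.card_pos.2 htne)).symm
  refine ⟨t.card - 1, fun k => L (t.equivFin.symm (Fin.cast hcard.symm k) : _), fun x hx => ?_⟩
  have hupper : (⨆ k, L (t.equivFin.symm (Fin.cast hcard.symm k) : _) x) ≤ p x :=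
    ciSup_le fun k => hL2 _ x
  have hbdd : BddAbove (Set.range fun k : Fin (t.card - 1 + 1) =>
      L (t.equivFin.symm (Fin.cast hcard.symm k) : _) x) :=
    (Set.finite_range _).bddAbove
  obtain ⟨i, hi, hxU⟩ := Set.mem_iUnion₂.1 (ht hx)
  have hlow : p x - ε ≤ ⨆ k, L (t.equivFin.symm (Fin.cast hcard.symm k) : _) x := by
    have hk : L (t.equivFin.symm (Fin.cast hcard.symm (Fin.cast hcard (t.equivFin ⟨i, hi⟩))) : _) x
        = L i x := by
      congr 1
      simp
    calc p x - ε ≤ L i x := by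
            have : p x - L i x < ε := hxU
            linarith
      _ = _ := hk.symm
      _ ≤ _ := le_ciSup hbdd _
  rw [abs_le]
  constructor <;> linarith
end
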